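/- There exists a multi-valued function F from the unit interval [0,1] to ℝ such that F(x) is a nonempty closed subset of ℝ for every x ∈ [0,1], the graph of F is a Gδ subset of [0,1] × ℝ, and the set of points of continuity of F is not a Π⁰₃ subset of [0,1], i.e., it is not a countable intersection of Fσ sets. -/

import Mathlib

open Set
open scoped ENNReal

/-- A multi-valued function `F : X → Set Y` is continuous at `x`. -/
def MVContinuousAt {X Y : Type*} [MetricSpace X] [MetricSpace Y]
    (F : X → Set Y) (x : X) : Prop :=
  ∃ y ∈ F x, ∀ ε > (0 : ℝ), ∃ δ > (0 : ℝ),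
    ∀ x', dist x' x < δ → ∃ y' ∈ F x', dist y y' < ε

/-- A set is `Fσ` if it is a countable union of closed sets. -/
def IsFsigma {X : Type*} [TopologicalSpace X] (S : Set X) : Prop :=
  ∃ g : ℕ → Set X, (∀ n, IsClosed (g n)) ∧ S = ⋃ n, g n

/-- A set is `Π⁰₃` if it is a countable intersection of `Fσ` sets. -/
def IsPi03 {X : Type*} [TopologicalSpace X] (S : Set X) : Prop :=
  ∃ g : ℕ → Set X, (∀ n, IsFsigma (g n)) ∧ S = ⋂ n, g n

set_option maxHeartbeats 1000000
noncomputable section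
namespace MVC
attribute [local instance] Classical.propDecidable

def f0 (s : ℕ → Bool) (j : ℕ) : ℝ := if s j then 2/3^(j+1) else 0

lemma f0_nonneg (s : ℕ → Bool) (j : ℕ) : 0 ≤ f0 s j := by
  unfold f0; split <;> positivity

lemma f0_le (s : ℕ → Bool) (j : ℕ) : f0 s j ≤ 2/3^(j+1) := by
  unfold f0; split
  · exact le_refl _
  · positivity

lemma geom_summable : Summable (fun j : ℕ => (2:ℝ)/3^(j+1)) := by
  have : (fun j : ℕ => (2:ℝ)/3^(j+1)) = fun j : ℕ => (2/3) * (1/3)^j := by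
    funext j; rw [pow_succ, one_div_pow]; ring
  rw [this]
  exact (summable_geometric_of_lt_one (by norm_num) (by norm_num)).mul_left _

lemma geom_tsum : ∑' j : ℕ, (2:ℝ)/3^(j+1) = 1 := by
  have h : (fun j : ℕ => (2:ℝ)/3^(j+1)) = fun j : ℕ => (2/3) * (1/3)^j := by
    funext j; rw [pow_succ, one_div_pow]; ring
  rw [h, tsum_mul_left, tsum_geometric_of_lt_one (by norm_num) (by norm_num)]
  norm_num

lemma summable_f0 (s : ℕ → Bool) : Summable (f0 s) :=
  Summable.of_nonneg_of_le (f0_nonneg s) (f0_le s) geom_summable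

def er (s : ℕ → Bool) : ℝ := ∑' j, f0 s j

lemma er_nonneg (s : ℕ → Bool) : 0 ≤ er s := tsum_nonneg (f0_nonneg s)

lemma er_le_one (s : ℕ → Bool) : er s ≤ 1 := by
  have := Summable.tsum_le_tsum (f0_le s) (summable_f0 s) geom_summable
  simpa [geom_tsum, er] using this

lemma f0_abs_sub (s s' : ℕ → Bool) (j : ℕ) : |f0 s j - f0 s' j| ≤ 2/3^(j+1) := by
  have h1 := f0_nonneg s j
  have h2 := f0_nonneg s' j
  have h3 := f0_le s j
  have h4 := f0_le s' j
  rw [abs_sub_le_iff]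
  constructor <;> linarith

lemma geom_tail_tsum (M : ℕ) : ∑' j : ℕ, (2:ℝ)/3^(j+M+1) = (1/3)^M := by
  have h : (fun j : ℕ => (2:ℝ)/3^(j+M+1)) = fun j : ℕ => (1/3)^M * (2/3^(j+1)) := by
    funext j
    rw [pow_add, pow_add]
    field_simp
    rw [one_div_pow]; field_simp; ring
  rw [h, tsum_mul_left, geom_tsum]
  norm_num

lemma tail_bound (s s' : ℕ → Bool) (M : ℕ) :
    |∑' j : ℕ, (f0 s (j+M) - f0 s' (j+M))| ≤ (1/3)^M := by
  have hs : Summable (fun j => f0 s (j+M)) := (summable_nat_add_iff M).2 (summable_f0 s)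
  have hs' : Summable (fun j => f0 s' (j+M)) := (summable_nat_add_iff M).2 (summable_f0 s')
  have hsub : Summable (fun j => f0 s (j+M) - f0 s' (j+M)) := hs.sub hs'
  have habs2 : Summable (fun j => ‖f0 s (j+M) - f0 s' (j+M)‖) := by
    simpa only [Real.norm_eq_abs] using hsub.abs
  have hn := norm_tsum_le_tsum_norm habs2
  simp only [Real.norm_eq_abs] at hn
  calc |∑' j : ℕ, (f0 s (j+M) - f0 s' (j+M))|
      ≤ ∑' j : ℕ, |f0 s (j+M) - f0 s' (j+M)| := hn
    _ ≤ ∑' j : ℕ, (2:ℝ)/3^(j+M+1) := by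
        apply Summable.tsum_le_tsum _ hsub.abs ((summable_nat_add_iff M).2 geom_summable)
        intro j
        simpa [add_assoc] using f0_abs_sub s s' (j+M)
    _ = (1/3)^M := geom_tail_tsum M

lemma er_split (s : ℕ → Bool) (M : ℕ) :
    er s = (∑ j ∈ Finset.range M, f0 s j) + ∑' j : ℕ, f0 s (j+M) :=
  (Summable.sum_add_tsum_nat_add M (summable_f0 s)).symm

/-- if `s` and `s'` agree below `M` then the images are `3^{-M}`-close -/
lemma er_close (s s' : ℕ → Bool) (M : ℕ) (h : ∀ j, j < M → s j = s' j) :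
    |er s - er s'| ≤ (1/3)^M := by
  have hsum : (∑ j ∈ Finset.range M, f0 s j) = ∑ j ∈ Finset.range M, f0 s' j := by
    apply Finset.sum_congr rfl
    intro j hj
    unfold f0
    rw [h j (Finset.mem_range.1 hj)]
  have : er s - er s' = ∑' j : ℕ, (f0 s (j+M) - f0 s' (j+M)) := by
    rw [er_split s M, er_split s' M, hsum]
    have hs : Summable (fun j => f0 s (j+M)) := (summable_nat_add_iff M).2 (summable_f0 s)
    have hs' : Summable (fun j => f0 s' (j+M)) := (summable_nat_add_iff M).2 (summable_f0 s')
    rw [Summable.tsum_sub hs hs']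
    ring
  rw [this]
  exact tail_bound s s' M

/-- if `s` and `s'` agree below `p` and differ at `p` then images are `3^{-(p+1)}`-apart -/
lemma er_far (s s' : ℕ → Bool) (p : ℕ) (h : ∀ j, j < p → s j = s' j) (hp : s p ≠ s' p) :
    (1/3)^(p+1) ≤ |er s - er s'| := by
  have hsum : (∑ j ∈ Finset.range (p+1), f0 s j) - (∑ j ∈ Finset.range (p+1), f0 s' j)
      = f0 s p - f0 s' p := by
    rw [Finset.sum_range_succ, Finset.sum_range_succ]
    have : (∑ j ∈ Finset.range p, f0 s j) = ∑ j ∈ Finset.range p, f0 s' j := by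
      apply Finset.sum_congr rfl
      intro j hj
      unfold f0
      rw [h j (Finset.mem_range.1 hj)]
    rw [this]; ring
  have habs : |f0 s p - f0 s' p| = 2/3^(p+1) := by
    unfold f0
    rcases Bool.eq_false_or_eq_true (s p) with h1 | h1 <;>
      rcases Bool.eq_false_or_eq_true (s' p) with h2 | h2 <;>
        simp [h1, h2] at hp ⊢ <;> positivity
  have key : er s - er s' = (f0 s p - f0 s' p) + ∑' j : ℕ, (f0 s (j+(p+1)) - f0 s' (j+(p+1))) := by
    rw [er_split s (p+1), er_split s' (p+1)]
    have hs : Summable (fun j => f0 s (j+(p+1))) := (summable_nat_add_iff _).2 (summable_f0 s)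
    have hs' : Summable (fun j => f0 s' (j+(p+1))) := (summable_nat_add_iff _).2 (summable_f0 s')
    rw [Summable.tsum_sub hs hs', ← hsum]
    ring
  have htail := tail_bound s s' (p+1)
  set A := f0 s p - f0 s' p with hA
  set T := ∑' j : ℕ, (f0 s (j+(p+1)) - f0 s' (j+(p+1))) with hT
  have h2 : |A| ≤ |A + T| + |T| := by
    calc |A| = |(A + T) + (-T)| := by ring_nf
      _ ≤ |A + T| + |(-T)| := abs_add_le _ _
      _ = |A + T| + |T| := by rw [abs_neg]
  have hpow : ((1:ℝ)/3)^(p+1) = 1/3^(p+1) := by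
    rw [div_pow, one_pow]
  rw [key]
  rw [hpow] at htail ⊢
  rw [habs] at h2
  have hx : (2:ℝ)/3^(p+1) = 2*(1/3^(p+1)) := by ring
  linarith


/-! ### the embedding into `Icc 0 1` -/

def eI (s : ℕ → Bool) : Icc (0:ℝ) 1 := ⟨er s, ⟨er_nonneg s, er_le_one s⟩⟩

lemma continuous_er : Continuous er := by
  apply continuous_tsum (u := fun j : ℕ => (2:ℝ)/3^(j+1))
  · intro j
    have h1 : Continuous (fun b : Bool => if b then (2:ℝ)/3^(j+1) else 0) :=
      continuous_of_discreteTopology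
    exact h1.comp (continuous_apply j)
  · exact geom_summable
  · intro j s
    rw [Real.norm_eq_abs, abs_of_nonneg (f0_nonneg s j)]
    exact f0_le s j

lemma continuous_eI : Continuous eI :=
  continuous_er.subtype_mk _

lemma dist_eI (s s' : ℕ → Bool) : dist (eI s) (eI s') = |er s - er s'| := by
  rw [Subtype.dist_eq, Real.dist_eq]
  rfl

lemma dist_eI_le {s s' : ℕ → Bool} {M : ℕ} (h : ∀ j, j < M → s j = s' j) :
    dist (eI s) (eI s') ≤ (1/3)^M := by
  rw [dist_eI]; exact er_close s s' M h

lemma agree_of_dist_lt {s s' : ℕ → Bool} {P : ℕ}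
    (h : dist (eI s) (eI s') < (1/3)^(P+1)) : ∀ j, j ≤ P → s j = s' j := by
  by_contra hcon
  push_neg at hcon
  have hex : ∃ j, s j ≠ s' j := by
    obtain ⟨j, _, hj⟩ := hcon
    exact ⟨j, hj⟩
  set p := Nat.find hex with hp
  have hpspec : s p ≠ s' p := Nat.find_spec hex
  have hagree : ∀ j, j < p → s j = s' j := fun j hj => by
    by_contra hne
    exact absurd (Nat.find_le hne) (not_le.2 hj)
  have hpP : p ≤ P := by
    obtain ⟨j, hjP, hj⟩ := hcon
    exact (Nat.find_le hj).trans hjP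
  have h1 := er_far s s' p hagree hpspec
  rw [dist_eI] at h
  have h2 : ((1:ℝ)/3)^(P+1) ≤ (1/3)^(p+1) :=
    pow_le_pow_of_le_one (by norm_num) (by norm_num) (by omega)
  linarith

lemma eI_injective : Function.Injective eI := by
  intro s s' hss
  by_contra hne
  have hex : ∃ j, s j ≠ s' j := Function.ne_iff.1 hne
  set p := Nat.find hex
  have h1 := er_far s s' p (fun j hj => by
    by_contra hc; exact absurd (Nat.find_le hc) (not_le.2 hj)) (Nat.find_spec hex)
  have heq : er s = er s' := congrArg Subtype.val hss
  rw [heq, sub_self, abs_zero] at h1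
  have : (0:ℝ) < (1/3)^(p+1) := by positivity
  linarith

/-! ### combinatorial definitions -/

/-- column `n` of `s` is `false` from index `I` on -/
def tail0 (n I : ℕ) (s : ℕ → Bool) : Prop := ∀ i, I ≤ i → s (Nat.pair n i) = false

/-- column `n` has infinitely many `true`s -/
def Gn (n : ℕ) : Set (ℕ → Bool) := {s | ∀ I, ∃ i, I ≤ i ∧ s (Nat.pair n i) = true}

lemma not_tail_iff (n : ℕ) (s : ℕ → Bool) : (¬ ∃ I, tail0 n I s) ↔ s ∈ Gn n := by
  unfold tail0 Gn
  push_neg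
  constructor
  · intro h I
    obtain ⟨i, hi, hne⟩ := h I
    exact ⟨i, hi, by simpa using hne⟩
  · intro h I
    obtain ⟨i, hi, htrue⟩ := h I
    exact ⟨i, hi, by simp [htrue]⟩

/-- every column eventually `false` -/
def E : Set (ℕ → Bool) := {s | ∀ n, ∃ I, tail0 n I s}

/-- value of the `n`-th branch -/
def v (n : ℕ) (s : ℕ → Bool) : ℝ :=
  if h : ∃ I, tail0 n I s then (1/2:ℝ)^(Nat.find h) else 0

lemma v_nonneg (n : ℕ) (s : ℕ → Bool) : 0 ≤ v n s := by
  unfold v; split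
  · positivity
  · exact le_refl 0

lemma v_le_one (n : ℕ) (s : ℕ → Bool) : v n s ≤ 1 := by
  unfold v; split
  · exact pow_le_one₀ (by norm_num) (by norm_num)
  · norm_num

lemma v_eq_zero_of_Gn {n : ℕ} {s : ℕ → Bool} (h : s ∈ Gn n) : v n s = 0 :=
  dif_neg ((not_tail_iff n s).2 h)

lemma v_pos_of_not_Gn {n : ℕ} {s : ℕ → Bool} (h : ∃ I, tail0 n I s) :
    v n s = (1/2)^(Nat.find h) := dif_pos h

lemma v_le_of_true {n : ℕ} {s : ℕ → Bool} {i : ℕ} (ht : s (Nat.pair n i) = true)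
    (h : ∃ I, tail0 n I s) : v n s ≤ (1/2)^(i+1) := by
  rw [v_pos_of_not_Gn h]
  have hfind : i + 1 ≤ Nat.find h := by
    rw [Nat.le_find_iff]
    intro m hm hmt
    have := hmt i (by omega)
    rw [ht] at this
    exact Bool.noConfusion this
  exact pow_le_pow_of_le_one (by norm_num) (by norm_num) hfind

lemma v_le_find {n : ℕ} {s : ℕ → Bool} (h : ∃ I, tail0 n I s) {I : ℕ} (hI : tail0 n I s) :
    v n s ≥ (1/2)^I := by
  rw [v_pos_of_not_Gn h]
  exact pow_le_pow_of_le_one (by norm_num) (by norm_num) (Nat.find_le hI)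


/-! ### the multivalued function -/

def FF (x : Icc (0:ℝ) 1) : Set ℝ :=
  {y | x ∉ range eI ∨ ∃ s n, eI s = x ∧ y = 4*n + v n s}

lemma mem_FF_of_not_mem {x : Icc (0:ℝ) 1} (h : x ∉ range eI) (y : ℝ) : y ∈ FF x :=
  Or.inl h

lemma FF_eI (s : ℕ → Bool) : FF (eI s) = ⋃ n : ℕ, {(4*n + v n s : ℝ)} := by
  ext y
  simp only [FF, mem_setOf_eq, mem_iUnion, mem_singleton_iff]
  constructor
  · rintro (h | ⟨s', n, hs', rfl⟩)
    · exact absurd (mem_range_self s) h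
    · exact ⟨n, by rw [eI_injective hs']⟩
  · rintro ⟨n, rfl⟩
    exact Or.inr ⟨s, n, rfl, rfl⟩

lemma FF_nonempty (x : Icc (0:ℝ) 1) : (FF x).Nonempty := by
  by_cases h : x ∈ range eI
  · obtain ⟨s, rfl⟩ := h
    rw [FF_eI]
    exact ⟨4*(0:ℕ) + v 0 s, mem_iUnion.2 ⟨0, mem_singleton _⟩⟩
  · exact ⟨0, Or.inl h⟩

lemma FF_closed (x : Icc (0:ℝ) 1) : IsClosed (FF x) := by
  by_cases h : x ∈ range eI
  · obtain ⟨s, rfl⟩ := h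
    rw [FF_eI]
    apply LocallyFinite.isClosed_iUnion
    · intro y
      refine ⟨Metric.ball y 1, Metric.ball_mem_nhds y one_pos, ?_⟩
      apply Set.Finite.subset (Set.finite_le_nat ⌈(|y|+1)/4⌉₊)
      rintro n ⟨z, hz1, hz2⟩
      simp only [mem_singleton_iff] at hz1
      rw [Metric.mem_ball, Real.dist_eq] at hz2
      subst hz1
      have h1 := v_nonneg n s
      have h2 : (4*n : ℝ) ≤ |y| + 1 := by
        rcases abs_sub_lt_iff.1 hz2 with ⟨ha, hb⟩
        have := le_abs_self y
        linarith
      simp only [mem_setOf_eq]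
      have hn : (n:ℝ) ≤ (|y|+1)/4 := by linarith
      exact Nat.cast_le.1 (hn.trans (Nat.le_ceil _))
    · intro n
      exact isClosed_singleton
  · have : FF x = univ := eq_univ_of_forall (mem_FF_of_not_mem h)
    rw [this]
    exact isClosed_univ


/-! ### a union lemma for Gδ sets -/

open EMetric in
lemma isGδ_union_pieces {Y : Type*} [MetricSpace Y] (A : Set Y) (B O : ℕ → Set Y)
    (hA : IsGδ A) (hB : ∀ n, IsGδ (B n)) (hO : ∀ n, IsOpen (O n))
    (hBO : ∀ n, B n ⊆ O n) (hAO : ∀ n, A ∩ O n = ∅)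
    (hdisj : ∀ m n, m ≠ n → O m ∩ O n = ∅) :
    IsGδ (A ∪ ⋃ n, B n) := by
  obtain ⟨V0, hV0open, hV0⟩ := hA.eq_iInter_nat
  have hBW : ∀ n, ∃ W : ℕ → Set Y, (∀ j, IsOpen (W j)) ∧ B n = ⋂ j, W j :=
    fun n => (hB n).eq_iInter_nat
  choose W0 hW0open hW0 using hBW
  set V : ℕ → Set Y := fun j => ⋂ i ∈ Finset.range (j+1), V0 i with hV
  set W : ℕ → ℕ → Set Y := fun n j => ⋂ i ∈ Finset.range (j+1), W0 n i with hW
  have hVopen : ∀ j, IsOpen (V j) := fun j => isOpen_biInter_finset (fun i _ => hV0open i)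
  have hWopen : ∀ n j, IsOpen (W n j) := fun n j => isOpen_biInter_finset (fun i _ => hW0open n i)
  have hVA : ⋂ j, V j = A := by
    rw [hV0]
    apply Subset.antisymm
    · intro p hp
      apply mem_iInter.2
      intro i
      have := mem_iInter.1 hp i
      exact mem_iInter.1 (mem_iInter.1 (by exact this) i) (Finset.self_mem_range_succ i)
    · intro p hp
      apply mem_iInter.2
      intro j
      apply mem_iInter.2; intro i; apply mem_iInter.2; intro _
      exact mem_iInter.1 hp i
  have hWB : ∀ n, ⋂ j, W n j = B n := by
    intro n
    rw [hW0 n]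
    apply Subset.antisymm
    · intro p hp
      apply mem_iInter.2
      intro i
      exact mem_iInter.1 (mem_iInter.1 (mem_iInter.1 hp i) i) (Finset.self_mem_range_succ i)
    · intro p hp
      apply mem_iInter.2; intro j
      apply mem_iInter.2; intro i; apply mem_iInter.2; intro _
      exact mem_iInter.1 hp i
  have hVmono : ∀ {j j'}, j ≤ j' → V j' ⊆ V j := by
    intro j j' hjj p hp
    apply mem_iInter.2; intro i; apply mem_iInter.2; intro hi
    exact mem_iInter.1 (mem_iInter.1 hp i) (Finset.mem_range.2 (by
      have := Finset.mem_range.1 hi; omega))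
  have hWmono : ∀ n {j j'}, j ≤ j' → W n j' ⊆ W n j := by
    intro n j j' hjj p hp
    apply mem_iInter.2; intro i; apply mem_iInter.2; intro hi
    exact mem_iInter.1 (mem_iInter.1 hp i) (Finset.mem_range.2 (by
      have := Finset.mem_range.1 hi; omega))
  set Ω : Set Y := ⋃ n, O n with hΩ
  set U : ℕ → Set Y := fun j => {x | infEdist x Ωᶜ < (j:ℝ≥0∞)⁻¹} with hU
  have hUopen : ∀ j, IsOpen (U j) :=
    fun j => continuous_infEdist.isOpen_preimage _ isOpen_Iio
  refine isGδ_iff_eq_iInter_nat.2 ⟨fun j => (V j ∩ U j) ∪ ⋃ n, (W n j ∩ O n), ?_, ?_⟩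
  · intro j
    exact ((hVopen j).inter (hUopen j)).union (isOpen_iUnion fun n => (hWopen n j).inter (hO n))
  · apply Subset.antisymm
    · rintro p (hp | hp)
      · have hpV : p ∈ ⋂ j, V j := hVA.symm ▸ hp
        have hpΩ : p ∉ Ω := by
          intro hmem
          obtain ⟨n, hn⟩ := mem_iUnion.1 hmem
          have hcon : p ∈ A ∩ O n := ⟨hp, hn⟩
          rw [hAO n] at hcon
          exact hcon
        apply mem_iInter.2
        intro j
        left
        refine ⟨mem_iInter.1 hpV j, ?_⟩
        have h0 : infEdist p Ωᶜ = 0 := infEdist_zero_of_mem hpΩ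
        show p ∈ U j
        rw [hU]
        simp only [mem_setOf_eq, h0]
        exact ENNReal.inv_pos.2 (ENNReal.natCast_ne_top j)
      · obtain ⟨n, hn⟩ := mem_iUnion.1 hp
        apply mem_iInter.2
        intro j
        right
        have hpW : p ∈ ⋂ j, W n j := (hWB n).symm ▸ hn
        exact mem_iUnion.2 ⟨n, mem_iInter.1 hpW j, hBO n hn⟩
    · intro p hp
      rw [mem_iInter] at hp
      by_cases hpΩ : p ∈ Ω
      · obtain ⟨n₀, hn₀⟩ := mem_iUnion.1 hpΩ
        have hpos : infEdist p Ωᶜ ≠ 0 := by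
          intro h0
          have : p ∈ closure Ωᶜ := mem_closure_iff_infEdist_zero.2 h0
          rw [IsClosed.closure_eq (isClosed_compl_iff.2 (isOpen_iUnion hO))] at this
          exact this hpΩ
        obtain ⟨j₀, hj₀⟩ := ENNReal.exists_inv_nat_lt hpos
        have hnotU : ∀ j, j₀ ≤ j → p ∉ U j := by
          intro j hj hUj
          have h1 : ((j:ℝ≥0∞))⁻¹ ≤ ((j₀:ℝ≥0∞))⁻¹ :=
            ENNReal.inv_le_inv' (by exact_mod_cast Nat.cast_le.2 hj)
          exact absurd (lt_of_lt_of_le hUj h1) (not_lt.2 hj₀.le)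
        have hWn₀ : ∀ j, p ∈ W n₀ j := by
          intro j
          have hj' := hp (max j j₀)
          rcases hj' with h | h
          · exact absurd h.2 (hnotU _ (le_max_right j j₀))
          · obtain ⟨n, hn⟩ := mem_iUnion.1 h
            have hnn₀ : n = n₀ := by
              by_contra hne
              have hcon : p ∈ O n ∩ O n₀ := ⟨hn.2, hn₀⟩
              rw [hdisj n n₀ hne] at hcon
              exact hcon
            subst hnn₀
            exact hWmono n (le_max_left j j₀) hn.1
        right
        exact mem_iUnion.2 ⟨n₀, (hWB n₀) ▸ mem_iInter.2 hWn₀⟩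
      · left
        have hVAll : ∀ j, p ∈ V j := by
          intro j
          rcases hp j with h | h
          · exact h.1
          · obtain ⟨n, hn⟩ := mem_iUnion.1 h
            exact absurd (mem_iUnion.2 ⟨n, hn.2⟩) hpΩ
        exact hVA ▸ mem_iInter.2 hVAll


/-! ### images under eI -/

lemma isClosed_image_eI {C : Set (ℕ → Bool)} (hC : IsClosed C) : IsClosed (eI '' C) :=
  (hC.isCompact.image continuous_eI).isClosed

lemma isClosed_range_eI : IsClosed (range eI) := by
  rw [← image_univ]
  exact isClosed_image_eI isClosed_univ

lemma isGδ_preimage {X Y : Type*} [TopologicalSpace X] [TopologicalSpace Y]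
    {f : X → Y} (hf : Continuous f) {s : Set Y} (hs : IsGδ s) : IsGδ (f ⁻¹' s) := by
  obtain ⟨g, hgo, rfl⟩ := hs.eq_iInter_nat
  rw [preimage_iInter]
  exact IsGδ.iInter_of_isOpen fun n => (hgo n).preimage hf

lemma image_eI_open {Vo : Set (ℕ → Bool)} (hVo : IsOpen Vo) :
    eI '' Vo = range eI ∩ (eI '' Voᶜ)ᶜ := by
  have h1 : eI '' Vo = eI '' univ \ eI '' Voᶜ := by
    rw [← Set.image_diff eI_injective]
    congr 1
    simp [diff_eq, compl_compl]
  rw [h1, image_univ]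
  rfl

lemma isOpen_coord (q : ℕ) (b : Bool) : IsOpen {s : ℕ → Bool | s q = b} := by
  have h : {s : ℕ → Bool | s q = b} = (fun s : ℕ → Bool => s q) ⁻¹' {b} := rfl
  rw [h]
  exact (continuous_apply q).isOpen_preimage _ (isOpen_discrete _)

lemma isClosed_coord (q : ℕ) (b : Bool) : IsClosed {s : ℕ → Bool | s q = b} := by
  have h : {s : ℕ → Bool | s q = b} = (fun s : ℕ → Bool => s q) ⁻¹' {b} := rfl
  rw [h]
  exact IsClosed.preimage (continuous_apply q) (isClosed_discrete _)

lemma isOpen_Vn (n I : ℕ) : IsOpen {s : ℕ → Bool | ∃ i, I ≤ i ∧ s (Nat.pair n i) = true} := by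
  have : {s : ℕ → Bool | ∃ i, I ≤ i ∧ s (Nat.pair n i) = true}
      = ⋃ i, ⋃ (_ : I ≤ i), {s : ℕ → Bool | s (Nat.pair n i) = true} := by
    ext s; simp [mem_iUnion]
  rw [this]
  exact isOpen_iUnion fun i => isOpen_iUnion fun _ => isOpen_coord (Nat.pair n i) true

lemma Gn_eq_iInter (n : ℕ) :
    Gn n = ⋂ I, {s : ℕ → Bool | ∃ i, I ≤ i ∧ s (Nat.pair n i) = true} := by
  ext s; simp [Gn, mem_iInter]

lemma image_iInter_eI {g : ℕ → Set (ℕ → Bool)} :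
    eI '' (⋂ I, g I) = ⋂ I, eI '' g I := by
  apply Subset.antisymm
  · exact subset_iInter fun I => image_mono (iInter_subset _ I)
  · intro x hx
    have h0 := mem_iInter.1 hx 0
    obtain ⟨s, _, rfl⟩ := h0
    refine ⟨s, mem_iInter.2 fun I => ?_, rfl⟩
    obtain ⟨sI, hsI, heq⟩ := mem_iInter.1 hx I
    rwa [← eI_injective heq]

lemma isGδ_image_Gn (n : ℕ) : IsGδ (eI '' Gn n) := by
  rw [Gn_eq_iInter, image_iInter_eI]
  have h : (⋂ I, eI '' {s : ℕ → Bool | ∃ i, I ≤ i ∧ s (Nat.pair n i) = true})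
      = range eI ∩ ⋂ I, (eI '' {s : ℕ → Bool | ∃ i, I ≤ i ∧ s (Nat.pair n i) = true}ᶜ)ᶜ := by
    rw [iInter_congr fun I => image_eI_open (isOpen_Vn n I), inter_iInter]
  rw [h]
  exact IsGδ.inter isClosed_range_eI.isGδ (IsGδ.iInter_of_isOpen fun I =>
    (isClosed_image_eI (isOpen_Vn n I).isClosed_compl).isOpen_compl)

/-- the closed set of sequences of exact rank `k` in column `n` -/
def T (n k : ℕ) : Set (ℕ → Bool) :=
  {s | tail0 n k s ∧ ∀ j, k = j + 1 → s (Nat.pair n j) = true}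

lemma isClosed_T (n k : ℕ) : IsClosed (T n k) := by
  have : T n k = (⋂ i, ⋂ (_ : k ≤ i), {s : ℕ → Bool | s (Nat.pair n i) = false})
      ∩ ⋂ j, ⋂ (_ : k = j + 1), {s : ℕ → Bool | s (Nat.pair n j) = true} := by
    ext s
    simp only [T, mem_setOf_eq, mem_inter_iff, mem_iInter, tail0]
    try tauto
  rw [this]
  apply IsClosed.inter
  · exact isClosed_iInter fun i => isClosed_iInter fun _ => isClosed_coord _ false
  · exact isClosed_iInter fun j => isClosed_iInter fun _ => isClosed_coord _ true

lemma v_eq_on_T {n k : ℕ} {s : ℕ → Bool} (hs : s ∈ T n k) : v n s = (1/2)^k := by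
  have h : ∃ I, tail0 n I s := ⟨k, hs.1⟩
  rw [v_pos_of_not_Gn h]
  congr 1
  apply le_antisymm (Nat.find_le hs.1)
  rw [Nat.le_find_iff]
  intro m hm htail
  have hk : k = (k - 1) + 1 := by omega
  have htrue := hs.2 (k-1) hk
  have hfalse := htail (k-1) (by omega)
  rw [htrue] at hfalse
  exact Bool.noConfusion hfalse

lemma mem_T_find {n : ℕ} {s : ℕ → Bool} (h : ∃ I, tail0 n I s) : s ∈ T n (Nat.find h) := by
  refine ⟨Nat.find_spec h, ?_⟩
  intro j hj
  have hnot : ¬ tail0 n j s := Nat.find_min h (by omega)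
  unfold tail0 at hnot
  push_neg at hnot
  obtain ⟨i, hij, hne⟩ := hnot
  have : i = j := by
    by_contra hij'
    have : j + 1 ≤ i := by omega
    have := Nat.find_spec h i (by omega)
    exact hne this
  subst this
  simpa using hne


/-! ### the graph is Gδ -/

def An (n : ℕ) : Set (Icc (0:ℝ) 1 × ℝ) := {p | p.1 ∈ eI '' Gn n ∧ p.2 = 4*n}
def Bn (n k : ℕ) : Set (Icc (0:ℝ) 1 × ℝ) := {p | p.1 ∈ eI '' T n k ∧ p.2 = 4*n + (1/2)^k}
def Γn (n : ℕ) : Set (Icc (0:ℝ) 1 × ℝ) := An n ∪ ⋃ k, Bn n k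

lemma isGδ_An (n : ℕ) : IsGδ (An n) := by
  have h : An n = (Prod.fst ⁻¹' (eI '' Gn n)) ∩ (Prod.snd ⁻¹' {(4*n : ℝ)}) := rfl
  rw [h]
  exact (isGδ_preimage continuous_fst (isGδ_image_Gn n)).inter
    (isGδ_preimage continuous_snd (IsGδ.singleton _))

lemma isClosed_Bn (n k : ℕ) : IsClosed (Bn n k) := by
  have h : Bn n k = (Prod.fst ⁻¹' (eI '' T n k)) ∩ (Prod.snd ⁻¹' {(4*n + (1/2)^k : ℝ)}) := rfl
  rw [h]
  exact ((isClosed_image_eI (isClosed_T n k)).preimage continuous_fst).inter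
    (isClosed_singleton.preimage continuous_snd)

lemma pow_half_pos (k : ℕ) : (0:ℝ) < (1/2)^k := by positivity

lemma pow_half_le_one (k : ℕ) : ((1:ℝ)/2)^k ≤ 1 := pow_le_one₀ (by norm_num) (by norm_num)

lemma isGδ_Γn (n : ℕ) : IsGδ (Γn n) := by
  apply isGδ_union_pieces (An n) (Bn n)
    (fun k => Prod.snd ⁻¹' Ioo (4*n + (3/4)*(1/2)^k) (4*n + (3/2)*(1/2)^k))
    (isGδ_An n) (fun k => (isClosed_Bn n k).isGδ)
    (fun k => (isOpen_Ioo).preimage continuous_snd)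
  · intro k p hp
    have h2 := hp.2
    simp only [mem_preimage, mem_Ioo, h2]
    have := pow_half_pos k
    constructor <;> linarith
  · intro k
    ext p
    simp only [mem_inter_iff, mem_empty_iff_false, iff_false, not_and]
    intro hA
    simp only [mem_preimage, mem_Ioo, hA.2]
    have := pow_half_pos k
    intro hcon
    linarith [hcon.1]
  · intro k k' hkk
    rcases Nat.lt_or_ge k k' with h | h
    · apply eq_empty_iff_forall_notMem.2
      rintro p ⟨hp1, hp2⟩
      simp only [mem_preimage, mem_Ioo] at hp1 hp2
      have hle : ((1:ℝ)/2)^k' ≤ (1/2)^(k+1) :=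
        pow_le_pow_of_le_one (by norm_num) (by norm_num) (by omega)
      have : ((1:ℝ)/2)^(k+1) = (1/2)^k/2 := by rw [pow_succ]; ring
      obtain ⟨h1, h2⟩ := hp1
      obtain ⟨h3, h4⟩ := hp2
      linarith
    · have hlt : k' < k := by omega
      apply eq_empty_iff_forall_notMem.2
      rintro p ⟨hp1, hp2⟩
      simp only [mem_preimage, mem_Ioo] at hp1 hp2
      have hle : ((1:ℝ)/2)^k ≤ (1/2)^(k'+1) :=
        pow_le_pow_of_le_one (by norm_num) (by norm_num) (by omega)
      have : ((1:ℝ)/2)^(k'+1) = (1/2)^k'/2 := by rw [pow_succ]; ring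
      obtain ⟨h1, h2⟩ := hp1
      obtain ⟨h3, h4⟩ := hp2
      linarith

lemma Γn_subset (n : ℕ) : Γn n ⊆ {p : Icc (0:ℝ) 1 × ℝ | p.1 ∈ range eI} := by
  rintro p (hp | hp)
  · obtain ⟨s, _, hs⟩ := hp.1
    exact ⟨s, hs⟩
  · obtain ⟨k, hk⟩ := mem_iUnion.1 hp
    obtain ⟨s, _, hs⟩ := hk.1
    exact ⟨s, hs⟩

lemma isGδ_ΓU : IsGδ (∅ ∪ ⋃ n, Γn n) := by
  apply isGδ_union_pieces ∅ Γn
    (fun n => Prod.snd ⁻¹' Ioo ((4*n : ℝ) - 1) (4*n + 2))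
    isOpen_empty.isGδ isGδ_Γn
    (fun n => (isOpen_Ioo).preimage continuous_snd)
  · intro n p hp
    rcases hp with hA | hB
    · simp only [mem_preimage, mem_Ioo, hA.2]
      constructor <;> [linarith; linarith]
    · obtain ⟨k, hk⟩ := mem_iUnion.1 hB
      simp only [mem_preimage, mem_Ioo, hk.2]
      have h1 := pow_half_pos k
      have h2 := pow_half_le_one k
      constructor <;> linarith
  · intro n
    simp
  · intro m n hmn
    rcases Nat.lt_or_ge m n with h | h
    · apply eq_empty_iff_forall_notMem.2
      rintro p ⟨hp1, hp2⟩
      simp only [mem_preimage, mem_Ioo] at hp1 hp2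
      have hcast : (m:ℝ) + 1 ≤ n := by exact_mod_cast h
      obtain ⟨h1, h2⟩ := hp1
      obtain ⟨h3, h4⟩ := hp2
      linarith
    · have hlt : n < m := by omega
      apply eq_empty_iff_forall_notMem.2
      rintro p ⟨hp1, hp2⟩
      simp only [mem_preimage, mem_Ioo] at hp1 hp2
      have hcast : (n:ℝ) + 1 ≤ m := by exact_mod_cast hlt
      obtain ⟨h1, h2⟩ := hp1
      obtain ⟨h3, h4⟩ := hp2
      linarith

lemma isGδ_union_open {Y : Type*} [MetricSpace Y] {A O : Set Y} (hA : IsGδ A)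
    (hO : IsOpen O) (hAO : A ∩ O = ∅) : IsGδ (A ∪ O) := by
  have h := isGδ_union_pieces A (fun k => if k = 0 then O else ∅)
    (fun k => if k = 0 then O else ∅) hA
    (fun k => by cases k <;> simp <;> exact hO.isGδ)
    (fun k => by cases k <;> simp <;> exact hO)
    (fun k => subset_refl _)
    (fun k => by cases k <;> simp [hAO])
    (fun m k hmk => by
      cases m <;> cases k <;> simp_all)
  have heq : A ∪ ⋃ k, (if k = 0 then O else ∅) = A ∪ O := by
    congr 1
    ext y
    simp only [mem_iUnion]
    constructor
    · rintro ⟨k, hk⟩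
      by_cases h0 : k = 0
      · rwa [h0, if_pos rfl] at hk
      · rw [if_neg h0] at hk; exact absurd hk (notMem_empty _)
    · intro hy
      exact ⟨0, by rwa [if_pos rfl]⟩
  rwa [heq] at h

lemma graph_eq : {p : Icc (0:ℝ) 1 × ℝ | p.2 ∈ FF p.1}
    = (∅ ∪ ⋃ n, Γn n) ∪ {p : Icc (0:ℝ) 1 × ℝ | p.1 ∉ range eI} := by
  ext ⟨x, y⟩
  simp only [mem_setOf_eq, empty_union, mem_union, mem_iUnion]
  constructor
  · rintro (h | ⟨s, n, heq, rfl⟩)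
    · exact Or.inr h
    · left
      by_cases hs : ∃ I, tail0 n I s
      · refine ⟨n, Or.inr (mem_iUnion.2 ⟨Nat.find hs, ?_, ?_⟩)⟩
        · exact heq ▸ ⟨s, mem_T_find hs, rfl⟩
        · simp only
          rw [v_pos_of_not_Gn hs]
      · refine ⟨n, Or.inl ⟨heq ▸ ⟨s, (not_tail_iff n s).1 hs, rfl⟩, ?_⟩⟩
        simp only
        rw [v_eq_zero_of_Gn ((not_tail_iff n s).1 hs)]
        ring
  · rintro (⟨n, hn | hn⟩ | h)
    · obtain ⟨⟨s, hsG, hs⟩, hy⟩ := hn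
      refine Or.inr ⟨s, n, hs, ?_⟩
      simp only at hy
      rw [hy, v_eq_zero_of_Gn hsG]
      ring
    · obtain ⟨k, ⟨⟨s, hsT, hs⟩, hy⟩⟩ := mem_iUnion.1 hn
      refine Or.inr ⟨s, n, hs, ?_⟩
      simp only at hy
      rw [hy, v_eq_on_T hsT]
    · exact Or.inl h

lemma isGδ_graph : IsGδ {p : Icc (0:ℝ) 1 × ℝ | p.2 ∈ FF p.1} := by
  rw [graph_eq]
  apply isGδ_union_open isGδ_ΓU
  · have h : {p : Icc (0:ℝ) 1 × ℝ | p.1 ∉ range eI} = Prod.fst ⁻¹' (range eI)ᶜ := rfl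
    rw [h]
    exact isClosed_range_eI.isOpen_compl.preimage continuous_fst
  · apply eq_empty_iff_forall_notMem.2
    rintro p ⟨hp1, hp2⟩
    rcases hp1 with h | h
    · exact absurd h (notMem_empty _)
    · obtain ⟨n, hn⟩ := mem_iUnion.1 h
      exact hp2 (Γn_subset n hn)


/-! ### the set of continuity points -/

lemma contAt_of_not_range {x : Icc (0:ℝ) 1} (h : x ∉ range eI) : MVContinuousAt FF x := by
  refine ⟨0, Or.inl h, ?_⟩
  intro ε hε
  obtain ⟨δ, hδ, hball⟩ := Metric.isOpen_iff.1 isClosed_range_eI.isOpen_compl x h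
  refine ⟨δ, hδ, ?_⟩
  intro x' hx'
  have hx'c : x' ∈ (range eI)ᶜ := hball (by rwa [Metric.mem_ball])
  exact ⟨0, Or.inl hx'c, by simpa using hε⟩

lemma contAt_of_Gn {s : ℕ → Bool} {n : ℕ} (hGn : s ∈ Gn n) : MVContinuousAt FF (eI s) := by
  refine ⟨4*n + v n s, Or.inr ⟨s, n, rfl, rfl⟩, ?_⟩
  intro ε hε
  obtain ⟨I, hI⟩ := exists_pow_lt_of_lt_one hε (by norm_num : (1:ℝ)/2 < 1)
  obtain ⟨i₀, hi₀I, hi₀⟩ := hGn I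
  refine ⟨(1/3)^(Nat.pair n i₀ + 1), by positivity, ?_⟩
  intro x' hx'
  by_cases hx'r : x' ∈ range eI
  · obtain ⟨s', rfl⟩ := hx'r
    have hagree := agree_of_dist_lt hx'
    have htrue : s' (Nat.pair n i₀) = true := by
      rw [hagree (Nat.pair n i₀) le_rfl]
      exact hi₀
    refine ⟨4*n + v n s', Or.inr ⟨s', n, rfl, rfl⟩, ?_⟩
    have hv' : v n s' ≤ (1/2)^(i₀+1) := by
      by_cases hs' : ∃ I, tail0 n I s'
      · exact v_le_of_true htrue hs'
      · rw [v_eq_zero_of_Gn ((not_tail_iff n s').1 hs')]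
        positivity
    have hvs : v n s = 0 := v_eq_zero_of_Gn hGn
    rw [Real.dist_eq, hvs]
    have habs : |4*(n:ℝ) + 0 - (4*n + v n s')| = v n s' := by
      rw [show 4*(n:ℝ) + 0 - (4*n + v n s') = -(v n s') by ring, abs_neg,
        abs_of_nonneg (v_nonneg n s')]
    rw [habs]
    have h1 : ((1:ℝ)/2)^(i₀+1) ≤ (1/2)^I :=
      pow_le_pow_of_le_one (by norm_num) (by norm_num) (by omega)
    linarith
  · exact ⟨4*n + v n s, Or.inl hx'r, by simpa using hε⟩

lemma not_contAt_of_E {s : ℕ → Bool} (hE : s ∈ E) : ¬ MVContinuousAt FF (eI s) := by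
  rintro ⟨y, hy, hcont⟩
  rcases hy with h | ⟨s₂, n, heq, rfl⟩
  · exact h (mem_range_self s)
  have hs2 : s = s₂ := (eI_injective heq).symm
  subst hs2
  have hsn : ∃ I, tail0 n I s := hE n
  set r := Nat.find hsn with hr
  have hvs : v n s = (1/2)^r := v_pos_of_not_Gn hsn
  obtain ⟨δ, hδ, hspec⟩ := hcont ((1/2)^(r+1)) (by positivity)
  obtain ⟨M, hM⟩ := exists_pow_lt_of_lt_one hδ (by norm_num : (1:ℝ)/3 < 1)
  set i := max M (r+1) with hi
  set Q := Nat.pair n i with hQ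
  set s' := Function.update s Q true with hs'
  have hagree : ∀ j, j < M → s' j = s j := by
    intro j hj
    apply Function.update_of_ne
    have h1 : M ≤ Q := le_trans (le_max_left M (r+1)) (Nat.right_le_pair n i)
    omega
  have hdist : dist (eI s') (eI s) ≤ (1/3)^M := dist_eI_le hagree
  obtain ⟨y', hy', hyy'⟩ := hspec (eI s') (lt_of_le_of_lt hdist hM)
  rcases hy' with h | ⟨s₃, m, heq3, rfl⟩
  · exact h (mem_range_self s')
  have hs3 : s' = s₃ := (eI_injective heq3).symm
  subst hs3
  have hQtrue : s' Q = true := Function.update_self Q true s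
  have hs'ex : ∃ I, tail0 n I s' := by
    refine ⟨i+1, ?_⟩
    intro j hj
    have hne : Nat.pair n j ≠ Q := by
      rw [hQ]
      intro hcon
      have := (Nat.pair_eq_pair.1 hcon).2
      omega
    rw [hs', Function.update_of_ne hne]
    apply Nat.find_spec hsn
    have : r + 1 ≤ i := le_max_right M (r+1)
    omega
  have hv' : v n s' ≤ (1/2)^(i+1) := v_le_of_true hQtrue hs'ex
  have hv'r : v n s' ≤ (1/2)^(r+2) := by
    refine le_trans hv' (pow_le_pow_of_le_one (by norm_num) (by norm_num) ?_)
    have : r + 1 ≤ i := le_max_right M (r+1)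
    omega
  rcases eq_or_ne m n with hmn | hmn
  · subst hmn
    rw [Real.dist_eq] at hyy'
    have hsplit : ((1:ℝ)/2)^(r+1) = (1/2)^r/2 := by rw [pow_succ]; ring
    have hsplit2 : ((1:ℝ)/2)^(r+2) = (1/2)^r/4 := by rw [pow_succ, pow_succ]; ring
    have hvnn := v_nonneg m s'
    have habs : |4*(m:ℝ) + v m s - (4*m + v m s')| = |v m s - v m s'| := by
      congr 1; ring
    rw [habs, hvs] at hyy'
    have h1 : ((1:ℝ)/2)^r - v m s' ≤ |(1/2)^r - v m s'| := by
      have := le_abs_self (((1:ℝ)/2)^r - v m s')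
      linarith
    linarith
  · rw [Real.dist_eq] at hyy'
    have hvs1 : v n s ≤ 1 := v_le_one n s
    have hvs0 : 0 ≤ v n s := v_nonneg n s
    have hvm1 : v m s' ≤ 1 := v_le_one m s'
    have hvm0 : 0 ≤ v m s' := v_nonneg m s'
    have hεle : ((1:ℝ)/2)^(r+1) ≤ 1 := pow_half_le_one (r+1)
    rcases Nat.lt_or_ge n m with h | h
    · have hc : (n:ℝ) + 1 ≤ m := by exact_mod_cast h
      have hX : 4*(n:ℝ) + v n s - (4*m + v m s') ≤ -3 := by linarith
      have := neg_le_abs (4*(n:ℝ) + v n s - (4*m + v m s'))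
      linarith
    · have h' : m < n := by omega
      have hc : (m:ℝ) + 1 ≤ n := by exact_mod_cast h'
      have hX : 3 ≤ 4*(n:ℝ) + v n s - (4*m + v m s') := by linarith
      have := le_abs_self (4*(n:ℝ) + v n s - (4*m + v m s'))
      linarith

lemma contSet_eq : {x : Icc (0:ℝ) 1 | MVContinuousAt FF x} = (eI '' E)ᶜ := by
  ext x
  simp only [mem_setOf_eq, mem_compl_iff]
  constructor
  · intro hx hxE
    obtain ⟨s, hsE, rfl⟩ := hxE
    exact not_contAt_of_E hsE hx
  · intro hx
    by_cases hr : x ∈ range eI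
    · obtain ⟨s, rfl⟩ := hr
      have hsE : s ∉ E := fun hEs => hx ⟨s, hEs, rfl⟩
      have : ∃ n, ¬ ∃ I, tail0 n I s := by
        by_contra hcon
        push_neg at hcon
        exact hsE hcon
      obtain ⟨n, hn⟩ := this
      exact contAt_of_Gn ((not_tail_iff n s).1 hn)
    · exact contAt_of_not_range hr


/-! ### the Baire category argument -/

def Pin (mm : ℕ) (S : Finset ℕ) : Set ℕ := {p | (Nat.unpair p).1 < mm ∨ p ∈ S}

lemma Pin_mono {mm mm' : ℕ} {S S' : Finset ℕ} (h1 : mm ≤ mm') (h2 : S ⊆ S') :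
    Pin mm S ⊆ Pin mm' S' := by
  rintro p (hp | hp)
  · exact Or.inl (lt_of_lt_of_le hp h1)
  · exact Or.inr (h2 hp)

lemma step_lemma (mm : ℕ) (S : Finset ℕ) (z : ℕ → Bool) (hz : z ∈ E)
    (H : Set (ℕ → Bool)) (hH : IsGδ H) (hHE : H ⊆ E) :
    ∃ (z' : ℕ → Bool) (S' : Finset ℕ), z' ∈ E ∧ S ⊆ S' ∧
      (∀ p ∈ Pin mm S, z' p = z p) ∧
      (∀ x : ℕ → Bool, (∀ p ∈ Pin (mm+1) S', x p = z' p) → x ∉ H) := by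
  classical
  set Pn := Pin mm S with hPn
  set Φ : (ℕ → Bool) → (ℕ → Bool) := fun t p => if p ∈ Pn then z p else t p with hΦ
  have hΦcont : Continuous Φ := by
    apply continuous_pi
    intro p
    by_cases hp : p ∈ Pn
    · simp only [hΦ, if_pos hp]
      exact continuous_const
    · simp only [hΦ, if_neg hp]
      exact continuous_apply p
  have hΦPn : ∀ t p, p ∈ Pn → Φ t p = z p := fun t p hp => by simp only [hΦ, if_pos hp]
  have hΦnPn : ∀ t p, p ∉ Pn → Φ t p = t p := fun t p hp => by simp only [hΦ, if_neg hp]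
  have hΦeq : ∀ t t', (∀ p, p ∉ Pn → t p = t' p) → Φ t = Φ t' := by
    intro t t' hag
    funext p
    by_cases hp : p ∈ Pn
    · rw [hΦPn t p hp, hΦPn t' p hp]
    · rw [hΦnPn t p hp, hΦnPn t' p hp, hag p hp]
  set Hs := Φ ⁻¹' H with hHs
  have hHsGδ : IsGδ Hs := isGδ_preimage hΦcont hH
  have hSnotPin : ∀ i, Nat.pair mm i ∉ S → Nat.pair mm i ∉ Pn := by
    intro i hiS
    rw [hPn, Pin]
    simp only [mem_setOf_eq, Nat.unpair_pair]
    push_neg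
    exact ⟨by omega, hiS⟩
  -- the meager cover
  set C : ℕ → Set (ℕ → Bool) :=
    fun I => {t | ∀ i, I ≤ i → Nat.pair mm i ∉ Pn → t (Nat.pair mm i) = false} with hC
  have hCclosed : ∀ I, IsClosed (C I) := by
    intro I
    have heq : C I = ⋂ i, ⋂ (_ : I ≤ i), ⋂ (_ : Nat.pair mm i ∉ Pn),
        {t : ℕ → Bool | t (Nat.pair mm i) = false} := by
      ext t
      simp only [hC, mem_setOf_eq, mem_iInter]
    rw [heq]
    exact isClosed_iInter fun i => isClosed_iInter fun _ => isClosed_iInter fun _ =>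
      isClosed_coord _ false
  have hCcompl_dense : ∀ I, Dense (C I)ᶜ := by
    intro I
    rw [dense_iff_inter_open]
    rintro U hU ⟨t, ht⟩
    obtain ⟨Iset, u, hu, hsub⟩ := isOpen_pi_iff.1 hU t ht
    have hex : ∃ i, I ≤ i ∧ Nat.pair mm i ∉ Iset ∧ Nat.pair mm i ∉ S := by
      refine ⟨I + Iset.sup id + S.sup id + 1, by omega, ?_, ?_⟩
      · intro hcon
        have h1 := Finset.le_sup (f := id) hcon
        have h2 := Nat.right_le_pair mm (I + Iset.sup id + S.sup id + 1)
        simp only [id_eq] at h1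
        omega
      · intro hcon
        have h1 := Finset.le_sup (f := id) hcon
        have h2 := Nat.right_le_pair mm (I + Iset.sup id + S.sup id + 1)
        simp only [id_eq] at h1
        omega
    obtain ⟨i, hiI, hi1, hi2⟩ := hex
    set q := Nat.pair mm i with hq
    refine ⟨Function.update t q true, ?_, ?_⟩
    · apply hsub
      intro a ha
      rw [Finset.mem_coe] at ha
      have hane : a ≠ q := by
        intro hcon
        rw [hcon] at ha
        exact hi1 ha
      rw [Function.update_of_ne hane]
      exact (hu a ha).2
    · simp only [mem_compl_iff, hC, mem_setOf_eq]
      push_neg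
      refine ⟨i, hiI, hSnotPin i hi2, ?_⟩
      rw [Function.update_self]
      decide
  have hHsC : Hs ⊆ ⋃ I, C I := by
    intro t ht
    obtain ⟨I, hI⟩ := (hHE ht) mm
    refine mem_iUnion.2 ⟨I, ?_⟩
    intro i hi hpin
    have h1 := hI i hi
    rwa [hΦnPn t _ hpin] at h1
  -- Hs is not dense
  have hnotdense : ¬ Dense Hs := by
    intro hdense
    obtain ⟨W, hWopen, hWeq⟩ := hHsGδ.eq_iInter_nat
    have hWdense : ∀ j, Dense (W j) := by
      intro j
      apply Dense.mono _ hdense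
      rw [hWeq]
      exact iInter_subset W j
    have hBaire : Dense (⋂ i, Sum.elim W (fun I => (C I)ᶜ) i) := by
      apply dense_iInter_of_isOpen
      · rintro (j | I)
        · exact hWopen j
        · exact (hCclosed I).isOpen_compl
      · rintro (j | I)
        · exact hWdense j
        · exact hCcompl_dense I
    obtain ⟨t, ht⟩ := hBaire.nonempty
    have htHs : t ∈ Hs := by
      rw [hWeq]
      exact mem_iInter.2 fun j => mem_iInter.1 ht (Sum.inl j)
    obtain ⟨I, hI⟩ := mem_iUnion.1 (hHsC htHs)
    exact (mem_iInter.1 ht (Sum.inr I)) hI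
  -- extract a cylinder disjoint from Hs
  rw [dense_iff_inter_open] at hnotdense
  push_neg at hnotdense
  obtain ⟨U, hUopen, hUne, hUHs⟩ := hnotdense
  obtain ⟨t₁, ht₁⟩ := hUne
  obtain ⟨T₀, u, hu, hsub⟩ := isOpen_pi_iff.1 hUopen t₁ ht₁
  -- the off-Pin cylinder still avoids Hs
  have hkey : ∀ x : ℕ → Bool, (∀ a, a ∈ T₀ → a ∉ Pn → x a = t₁ a) → x ∉ Hs := by
    intro x hcyl hxHs
    set x'' : ℕ → Bool := fun p => if p ∈ Pn then t₁ p else x p with hx''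
    have hx''U : x'' ∈ U := by
      apply hsub
      intro a ha
      rw [Finset.mem_coe] at ha
      by_cases hap : a ∈ Pn
      · simp only [hx'', if_pos hap]
        exact (hu a ha).2
      · simp only [hx'', if_neg hap]
        rw [hcyl a ha hap]
        exact (hu a ha).2
    have hx''Hs : x'' ∈ Hs := by
      have hΦsame : Φ x'' = Φ x := by
        apply hΦeq
        intro p hp
        simp only [hx'', if_neg hp]
      simp only [hHs, mem_preimage] at hxHs ⊢
      rw [hΦsame]
      exact hxHs
    have : x'' ∈ U ∩ Hs := ⟨hx''U, hx''Hs⟩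
    rw [hUHs] at this
    exact this
  -- define the new center and pinned set
  set t₀ : ℕ → Bool := fun p => if p ∉ Pn ∧ p ∈ T₀ then t₁ p else false with ht₀
  set z'' := Φ t₀ with hz''
  refine ⟨z'', S ∪ T₀, ?_, Finset.subset_union_left, ?_, ?_⟩
  · -- z'' ∈ E
    intro n
    obtain ⟨Iz, hIz⟩ := hz n
    refine ⟨Iz + T₀.sup id + 1, ?_⟩
    intro i hi
    have hqT₀ : Nat.pair n i ∉ T₀ := by
      intro hcon
      have h1 := Finset.le_sup (f := id) hcon
      have h2 := Nat.right_le_pair n i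
      simp only [id_eq] at h1
      omega
    by_cases hp : Nat.pair n i ∈ Pn
    · rw [hz'', hΦPn t₀ _ hp]
      exact hIz i (by omega)
    · rw [hz'', hΦnPn t₀ _ hp, ht₀]
      simp [hqT₀]
  · -- agreement on Pin mm S
    intro p hp
    exact hΦPn t₀ p hp
  · -- avoiding H
    intro x hx hxH
    have hxPn : ∀ p, p ∈ Pn → x p = z p := by
      intro p hp
      have hp' : p ∈ Pin (mm+1) (S ∪ T₀) := Pin_mono (by omega) Finset.subset_union_left hp
      rw [hx p hp', hz'', hΦPn t₀ p hp]
    have hΦx : Φ x = x := by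
      funext p
      by_cases hp : p ∈ Pn
      · rw [hΦPn x p hp, hxPn p hp]
      · exact hΦnPn x p hp
    have hxHs : x ∈ Hs := by
      simp only [hHs, mem_preimage, hΦx]
      exact hxH
    apply hkey x _ hxHs
    intro a haT₀ haPn
    have hp' : a ∈ Pin (mm+1) (S ∪ T₀) := Or.inr (Finset.mem_union_right S haT₀)
    rw [hx a hp', hz'', hΦnPn t₀ a haPn, ht₀]
    simp [haPn, haT₀]


lemma isGδ_compl_fsigma {X : Type*} [TopologicalSpace X] {S : Set X} (h : IsFsigma S) :
    IsGδ Sᶜ := by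
  obtain ⟨g, hgc, rfl⟩ := h
  rw [compl_iUnion]
  exact IsGδ.iInter fun n => (hgc n).isOpen_compl.isGδ

lemma false_mem_E : (fun _ : ℕ => false) ∈ E := fun n => ⟨0, fun i _ => rfl⟩

lemma not_pi03_contSet : ¬ IsPi03 {x : Icc (0:ℝ) 1 | MVContinuousAt FF x} := by
  rw [contSet_eq]
  rintro ⟨g, hgF, hgeq⟩
  classical
  set H : ℕ → Set (ℕ → Bool) := fun mm => eI ⁻¹' (g mm)ᶜ with hHdef
  have hHGδ : ∀ mm, IsGδ (H mm) :=
    fun mm => isGδ_preimage continuous_eI (isGδ_compl_fsigma (hgF mm))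
  have hHE : ∀ mm, H mm ⊆ E := by
    intro mm s hs
    have h1 : (eI '' E)ᶜ ⊆ g mm := by
      rw [hgeq]
      exact iInter_subset g mm
    have h2 : eI s ∈ eI '' E := by
      by_contra hc
      exact hs (h1 hc)
    obtain ⟨s2, hs2E, hs2⟩ := h2
    rwa [← eI_injective hs2]
  have hEcover : ∀ s ∈ E, ∃ mm, s ∈ H mm := by
    intro s hs
    have h1 : eI s ∉ (eI '' E)ᶜ := fun hc => hc ⟨s, hs, rfl⟩
    rw [hgeq, mem_iInter] at h1
    push_neg at h1
    obtain ⟨mm, hmm⟩ := h1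
    exact ⟨mm, hmm⟩
  -- the recursive construction
  have hstep : ∀ (mm : ℕ) (q : (ℕ → Bool) × Finset ℕ), q.1 ∈ E →
      ∃ q' : (ℕ → Bool) × Finset ℕ, q'.1 ∈ E ∧ q.2 ⊆ q'.2 ∧
        (∀ p ∈ Pin mm q.2, q'.1 p = q.1 p) ∧
        (∀ x : ℕ → Bool, (∀ p ∈ Pin (mm+1) q'.2, x p = q'.1 p) → x ∉ H mm) := by
    intro mm q hq
    obtain ⟨z', S', h1, h2, h3, h4⟩ :=
      step_lemma mm q.2 q.1 hq (H mm) (hHGδ mm) (hHE mm)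
    exact ⟨(z', S'), h1, h2, h3, h4⟩
  set seq : ℕ → {q : (ℕ → Bool) × Finset ℕ // q.1 ∈ E} :=
    fun mm => Nat.rec ⟨((fun _ => false), ∅), false_mem_E⟩
      (fun k ih => ⟨Classical.choose (hstep k ih.1 ih.2),
        (Classical.choose_spec (hstep k ih.1 ih.2)).1⟩) mm with hseq
  have hseqsucc : ∀ k, (seq (k+1)).1 = Classical.choose (hstep k (seq k).1 (seq k).2) :=
    fun k => rfl
  set zf : ℕ → (ℕ → Bool) := fun mm => (seq mm).1.1 with hzf
  set Sf : ℕ → Finset ℕ := fun mm => (seq mm).1.2 with hSf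
  have hspec : ∀ k, Sf k ⊆ Sf (k+1) ∧
      (∀ p ∈ Pin k (Sf k), zf (k+1) p = zf k p) ∧
      (∀ x : ℕ → Bool, (∀ p ∈ Pin (k+1) (Sf (k+1)), x p = zf (k+1) p) → x ∉ H k) := by
    intro k
    have h := Classical.choose_spec (hstep k (seq k).1 (seq k).2)
    exact ⟨h.2.1, h.2.2.1, h.2.2.2⟩
  have hSfmono : ∀ {k k'}, k ≤ k' → Sf k ⊆ Sf k' := by
    intro k k' hkk
    induction k' with
    | zero => have : k = 0 := by omega
              subst this; exact subset_refl _
    | succ k'' ih =>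
      rcases Nat.lt_or_ge k (k''+1) with h | h
      · exact subset_trans (ih (by omega)) (hspec k'').1
      · have : k = k'' + 1 := by omega
        subst this; exact subset_refl _
  have hchain : ∀ (k : ℕ) {k' : ℕ}, k ≤ k' → ∀ p ∈ Pin k (Sf k), zf k' p = zf k p := by
    intro k k' hkk
    induction k' with
    | zero => have : k = 0 := by omega
              subst this; intro p _; rfl
    | succ k'' ih =>
      rcases Nat.lt_or_ge k (k''+1) with h | h
      · intro p hp
        have h1 := ih (by omega) p hp
        have h2 : p ∈ Pin k'' (Sf k'') := Pin_mono (by omega) (hSfmono (by omega)) hp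
        rw [(hspec k'').2.1 p h2, h1]
      · have : k = k'' + 1 := by omega
        subst this; intro p _; rfl
  -- the diagonal point
  set xs : ℕ → Bool := fun p => zf ((Nat.unpair p).1 + 1) p with hxs
  have hxs_pin : ∀ (mm : ℕ), ∀ p ∈ Pin mm (Sf mm), xs p = zf mm p := by
    intro mm p hp
    rcases Nat.lt_or_ge (Nat.unpair p).1 mm with h | h
    · have hp1 : p ∈ Pin ((Nat.unpair p).1 + 1) (Sf ((Nat.unpair p).1 + 1)) :=
        Or.inl (by omega)
      have := hchain ((Nat.unpair p).1 + 1) (k' := mm) (by omega) p hp1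
      rw [hxs]
      simp only
      -- xs p = zf (col+1) p ; goal : zf (col+1) p = zf mm p is `this`
      exact this.symm ▸ rfl
    · -- col ≥ mm
      have := hchain mm (k' := (Nat.unpair p).1 + 1) (by omega) p hp
      exact this
  have hxsE : xs ∈ E := by
    intro n
    obtain ⟨I, hI⟩ := (seq (n+1)).2 n
    refine ⟨I, ?_⟩
    intro i hi
    have hcol : (Nat.unpair (Nat.pair n i)).1 = n := by rw [Nat.unpair_pair]
    rw [hxs]
    simp only [hcol]
    exact hI i hi
  obtain ⟨mm, hmm⟩ := hEcover xs hxsE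
  exact (hspec mm).2.2 xs (hxs_pin (mm+1)) hmm

end MVC
end

theorem exists_multivalued_function_continuity_set_not_Pi03 :
    ∃ F : Set.Icc (0 : ℝ) 1 → Set ℝ,
      (∀ x, (F x).Nonempty) ∧ (∀ x, IsClosed (F x)) ∧
      IsGδ {p : Set.Icc (0 : ℝ) 1 × ℝ | p.2 ∈ F p.1} ∧
      ¬ IsPi03 {x : Set.Icc (0 : ℝ) 1 | MVContinuousAt F x} :=
  ⟨MVC.FF, MVC.FF_nonempty, MVC.FF_closed, MVC.isGδ_graph, MVC.not_pi03_contSet⟩
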